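/- Let c̃ > 1. Then there exist constants C₁ > 0 and C₂ > 0 (with C₁ depending on c̃) such that for all u > 0: C₁·(1 + |log u|)·e^{−c̃u} ≤ L̃_2(u) ≤ C₂·(1 + |log u|)·e^{−u}, where L̃_2(u) = ∫_0^∞ exp(−s − u²/(4s))·s^{−1} ds. -/

import Mathlib

open MeasureTheory Real Set

lemma exp_div_le_aux {c s : ℝ} (hc : 0 < c) (hs : 0 < s) :
    Real.exp (-(c / s)) * s⁻¹ ≤ (2 * c)⁻¹ := by
  have h1 : c / s * Real.exp (-(c / s)) ≤ Real.exp (-1) := by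
    have h2 : c / s ≤ Real.exp (c / s - 1) := by
      have := Real.add_one_le_exp (c / s - 1); linarith
    calc c / s * Real.exp (-(c / s)) ≤ Real.exp (c / s - 1) * Real.exp (-(c / s)) :=
          mul_le_mul_of_nonneg_right h2 (Real.exp_pos _).le
      _ = Real.exp (-1) := by rw [← Real.exp_add]; ring_nf
  have he : Real.exp (-1) ≤ 1 / 2 := by
    have h2 : (2:ℝ) ≤ Real.exp 1 := by have := Real.add_one_le_exp 1; linarith
    rw [Real.exp_neg, inv_le_comm₀ (Real.exp_pos 1) (by norm_num)]
    linarith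
  have heq : Real.exp (-(c / s)) * s⁻¹ = c / s * Real.exp (-(c / s)) / c := by
    field_simp
  rw [heq, div_le_iff₀ hc]
  calc c / s * Real.exp (-(c / s)) ≤ 1/2 := h1.trans he
    _ = (2*c)⁻¹ * c := by field_simp

lemma amgm {u s : ℝ} (hs : 0 < s) : u ≤ s + u ^ 2 / (4 * s) := by
  have key : u ^ 2 / (4 * s) * (4 * s) = u ^ 2 := div_mul_cancel₀ _ (by positivity)
  nlinarith [sq_nonneg (2 * s - u)]

lemma f_cont {u : ℝ} :
    ContinuousOn (fun s => Real.exp (-s - u ^ 2 / (4 * s)) * s⁻¹) (Ioi (0:ℝ)) := by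
  apply ContinuousOn.mul
  · apply Real.continuous_exp.comp_continuousOn
    apply ContinuousOn.sub (continuous_neg.continuousOn)
    apply ContinuousOn.div continuousOn_const (by fun_prop)
    intro s hs
    have : (0:ℝ) < s := hs
    positivity
  · exact ContinuousOn.inv₀ continuousOn_id (fun s hs => ne_of_gt hs)

lemma f_nonneg {u : ℝ} {s : ℝ} (hs : 0 < s) :
    0 ≤ Real.exp (-s - u ^ 2 / (4 * s)) * s⁻¹ := by positivity

lemma f_eq {u s : ℝ} : Real.exp (-s - u ^ 2 / (4 * s)) * s⁻¹
    = Real.exp (-s) * (Real.exp (-(u ^ 2 / 4 / s)) * s⁻¹) := by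
  rw [← mul_assoc, ← Real.exp_add, div_div]; ring_nf

lemma f_integrable {u : ℝ} (hu : 0 < u) :
    IntegrableOn (fun s => Real.exp (-s - u ^ 2 / (4 * s)) * s⁻¹) (Ioi (0:ℝ)) := by
  have hexp : IntegrableOn (fun s : ℝ => (2 * (u ^ 2 / 4))⁻¹ * Real.exp (-s)) (Ioi (0:ℝ)) := by
    have := (exp_neg_integrableOn_Ioi (0:ℝ) (b := 1) one_pos).const_mul (2 * (u ^ 2 / 4))⁻¹
    simpa [IntegrableOn] using this
  refine Integrable.mono' hexp (f_cont.aestronglyMeasurable measurableSet_Ioi) ?_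
  filter_upwards [ae_restrict_mem measurableSet_Ioi] with s hs
  have hs' : (0:ℝ) < s := hs
  rw [Real.norm_of_nonneg (f_nonneg hs'), f_eq]
  rw [mul_comm ((2 * (u ^ 2 / 4))⁻¹) (Real.exp (-s))]
  refine mul_le_mul_of_nonneg_left ?_ (Real.exp_pos _).le
  exact exp_div_le_aux (by positivity) hs'

lemma split3 {f : ℝ → ℝ} {a b : ℝ} (ha : 0 < a) (hab : a ≤ b)
    (hf : IntegrableOn f (Ioi (0:ℝ))) :
    ∫ s in Ioi (0:ℝ), f s
      = (∫ s in Ioc 0 a, f s) + (∫ s in Ioc a b, f s) + ∫ s in Ioi b, f s := by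
  have h1 : Ioi (0:ℝ) = Ioc 0 a ∪ Ioi a := (Ioc_union_Ioi_eq_Ioi ha.le).symm
  have h2 : Ioi a = Ioc a b ∪ Ioi b := (Ioc_union_Ioi_eq_Ioi hab).symm
  have hIa : IntegrableOn f (Ioi a) := hf.mono_set (Ioi_subset_Ioi ha.le)
  rw [h1, setIntegral_union Ioc_disjoint_Ioi_same measurableSet_Ioi
      (hf.mono_set Ioc_subset_Ioi_self) hIa, h2,
    setIntegral_union Ioc_disjoint_Ioi_same measurableSet_Ioi
      (hIa.mono_set Ioc_subset_Ioi_self) (hIa.mono_set (Ioi_subset_Ioi hab)), add_assoc]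

lemma inv_integrableOn_Ioc {a b : ℝ} (ha : 0 < a) :
    IntegrableOn (fun s : ℝ => s⁻¹) (Ioc a b) := by
  rcases le_or_gt a b with h | h
  · have : IntegrableOn (fun s : ℝ => s⁻¹) (Icc a b) := by
      apply ContinuousOn.integrableOn_Icc
      exact ContinuousOn.inv₀ continuousOn_id (fun s hs => ne_of_gt (lt_of_lt_of_le ha hs.1))
    exact this.mono_set Ioc_subset_Icc_self
  · simp [Ioc_eq_empty (not_lt.mpr h.le)]

lemma int_inv_Ioc {a b : ℝ} (ha : 0 < a) (hab : a ≤ b) :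
    ∫ s in Ioc a b, s⁻¹ = Real.log (b / a) := by
  rw [← intervalIntegral.integral_of_le hab]
  apply integral_inv
  rw [uIcc_of_le hab]
  intro h0
  exact absurd (lt_of_lt_of_le ha h0.1) (lt_irrefl 0)

lemma int_const_Ioc {a b c : ℝ} (hab : a ≤ b) :
    ∫ _ in Ioc a b, c = (b - a) * c := by
  rw [setIntegral_const, measureReal_def, Real.volume_Ioc, ENNReal.toReal_ofReal (by linarith), smul_eq_mul]

lemma int_cexp_Ioi (a k : ℝ) :
    ∫ s in Ioi a, k * Real.exp (-s) = k * Real.exp (-a) := by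
  rw [integral_const_mul k, integral_exp_neg_Ioi]

lemma upper_small {u : ℝ} (hu0 : 0 < u) (hu : u ≤ 1) :
    (∫ s in Ioi (0:ℝ), Real.exp (-s - u ^ 2 / (4 * s)) * s⁻¹) ≤ 3 * (1 - Real.log u) := by
  have hint := f_integrable hu0
  have ha : (0:ℝ) < u ^ 2 := by positivity
  have hab : u ^ 2 ≤ 1 := by nlinarith
  rw [split3 ha hab hint]
  have hlog : Real.log u ≤ 0 := Real.log_nonpos hu0.le hu
  have hP1 : (∫ s in Ioc (0:ℝ) (u ^ 2), Real.exp (-s - u ^ 2 / (4 * s)) * s⁻¹) ≤ 2 := by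
    have hmono : (∫ s in Ioc (0:ℝ) (u ^ 2), Real.exp (-s - u ^ 2 / (4 * s)) * s⁻¹)
        ≤ ∫ _ in Ioc (0:ℝ) (u ^ 2), (2 * (u ^ 2 / 4))⁻¹ := by
      apply setIntegral_mono_on (hint.mono_set Ioc_subset_Ioi_self)
        (integrableOn_const (by rw [Real.volume_Ioc]; exact ENNReal.ofReal_ne_top))
        measurableSet_Ioc
      intro s hs
      have hs0 : 0 < s := hs.1
      rw [f_eq]
      calc Real.exp (-s) * (Real.exp (-(u ^ 2 / 4 / s)) * s⁻¹)
          ≤ 1 * (2 * (u ^ 2 / 4))⁻¹ := by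
            apply mul_le_mul (Real.exp_le_one_iff.mpr (by linarith))
              (exp_div_le_aux (by positivity) hs0) (by positivity) one_pos.le
        _ = (2 * (u ^ 2 / 4))⁻¹ := one_mul _
    calc (∫ s in Ioc (0:ℝ) (u ^ 2), Real.exp (-s - u ^ 2 / (4 * s)) * s⁻¹)
        ≤ ∫ _ in Ioc (0:ℝ) (u ^ 2), (2 * (u ^ 2 / 4))⁻¹ := hmono
      _ = (u ^ 2 - 0) * (2 * (u ^ 2 / 4))⁻¹ := int_const_Ioc (by positivity)
      _ = 2 := by field_simp; ring
  have hP2 : (∫ s in Ioc (u ^ 2) 1, Real.exp (-s - u ^ 2 / (4 * s)) * s⁻¹)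
      ≤ -(2 * Real.log u) := by
    have hmono : (∫ s in Ioc (u ^ 2) 1, Real.exp (-s - u ^ 2 / (4 * s)) * s⁻¹)
        ≤ ∫ s in Ioc (u ^ 2) 1, s⁻¹ := by
      apply setIntegral_mono_on
        (hint.mono_set (Ioc_subset_Ioi_self.trans (Ioi_subset_Ioi ha.le)))
        (inv_integrableOn_Ioc ha) measurableSet_Ioc
      intro s hs
      have hs0 : 0 < s := lt_trans ha hs.1
      have : Real.exp (-s - u ^ 2 / (4 * s)) ≤ 1 := by
        apply Real.exp_le_one_iff.mpr
        have : 0 ≤ u ^ 2 / (4 * s) := by positivity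
        linarith
      calc Real.exp (-s - u ^ 2 / (4 * s)) * s⁻¹ ≤ 1 * s⁻¹ :=
            mul_le_mul_of_nonneg_right this (by positivity)
        _ = s⁻¹ := one_mul _
    rw [int_inv_Ioc ha hab] at hmono
    rw [Real.log_div one_ne_zero (by positivity), Real.log_one, Real.log_pow] at hmono
    push_cast at hmono
    linarith
  have hP3 : (∫ s in Ioi (1:ℝ), Real.exp (-s - u ^ 2 / (4 * s)) * s⁻¹) ≤ 1 := by
    have hmono : (∫ s in Ioi (1:ℝ), Real.exp (-s - u ^ 2 / (4 * s)) * s⁻¹)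
        ≤ ∫ s in Ioi (1:ℝ), (1:ℝ) * Real.exp (-s) := by
      apply setIntegral_mono_on (hint.mono_set (Ioi_subset_Ioi one_pos.le))
        (by simpa [IntegrableOn] using (exp_neg_integrableOn_Ioi (1:ℝ) (b := 1) one_pos).const_mul (1:ℝ))
        measurableSet_Ioi
      intro s hs
      have hs0 : (0:ℝ) < s := lt_trans one_pos hs
      rw [f_eq, mul_comm (1:ℝ) (Real.exp (-s))]
      refine mul_le_mul_of_nonneg_left ?_ (Real.exp_pos _).le
      calc Real.exp (-(u ^ 2 / 4 / s)) * s⁻¹ ≤ 1 * 1 := by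
            have hdn : (0:ℝ) ≤ u ^ 2 / 4 / s := by positivity
            apply mul_le_mul (Real.exp_le_one_iff.mpr (by linarith))
              (inv_le_one_of_one_le₀ hs.le) (inv_nonneg.mpr hs0.le) one_pos.le
        _ = 1 := one_mul _
    rw [int_cexp_Ioi] at hmono
    have : Real.exp (-(1:ℝ)) ≤ 1 := Real.exp_le_one_iff.mpr (by norm_num)
    linarith
  linarith
lemma upper_large {u : ℝ} (hu : 1 ≤ u) :
    (∫ s in Ioi (0:ℝ), Real.exp (-s - u ^ 2 / (4 * s)) * s⁻¹) ≤ 5 * Real.exp (-u) := by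
  have hu0 : (0:ℝ) < u := lt_of_lt_of_le one_pos hu
  have hint := f_integrable hu0
  have ha : (0:ℝ) < u / 8 := by linarith
  have hab : u / 8 ≤ 4 * u := by linarith
  rw [split3 ha hab hint]
  have hP1 : (∫ s in Ioc (0:ℝ) (u / 8), Real.exp (-s - u ^ 2 / (4 * s)) * s⁻¹)
      ≤ Real.exp (-u) / 2 := by
    have hmono : (∫ s in Ioc (0:ℝ) (u / 8), Real.exp (-s - u ^ 2 / (4 * s)) * s⁻¹)
        ≤ ∫ _ in Ioc (0:ℝ) (u / 8), Real.exp (-u) * (2 * (u ^ 2 / 8))⁻¹ := by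
      apply setIntegral_mono_on (hint.mono_set Ioc_subset_Ioi_self)
        (integrableOn_const (by rw [Real.volume_Ioc]; exact ENNReal.ofReal_ne_top))
        measurableSet_Ioc
      intro s hs
      obtain ⟨hs0, hs8⟩ := hs
      have hA : u ≤ u ^ 2 / (8 * s) := by
        rw [le_div_iff₀ (by positivity)]
        nlinarith
      have hsplit : -s - u ^ 2 / (4 * s) ≤ -u + -(u ^ 2 / (8 * s)) := by
        have : u ^ 2 / (4 * s) = u ^ 2 / (8 * s) + u ^ 2 / (8 * s) := by ring
        have hs' : 0 < s := hs0
        nlinarith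
      calc Real.exp (-s - u ^ 2 / (4 * s)) * s⁻¹
          ≤ Real.exp (-u + -(u ^ 2 / (8 * s))) * s⁻¹ :=
            mul_le_mul_of_nonneg_right (Real.exp_le_exp.mpr hsplit) (by positivity)
        _ = Real.exp (-u) * (Real.exp (-(u ^ 2 / 8 / s)) * s⁻¹) := by
            rw [Real.exp_add, mul_assoc, div_div]
        _ ≤ Real.exp (-u) * (2 * (u ^ 2 / 8))⁻¹ := by
            refine mul_le_mul_of_nonneg_left ?_ (Real.exp_pos _).le
            exact exp_div_le_aux (by positivity) hs0
    rw [int_const_Ioc ha.le] at hmono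
    calc (∫ s in Ioc (0:ℝ) (u / 8), Real.exp (-s - u ^ 2 / (4 * s)) * s⁻¹)
        ≤ (u / 8 - 0) * (Real.exp (-u) * (2 * (u ^ 2 / 8))⁻¹) := hmono
      _ = Real.exp (-u) / (2 * u) := by field_simp; ring
      _ ≤ Real.exp (-u) / 2 := by
          apply div_le_div_of_nonneg_left (Real.exp_pos _).le two_pos
          linarith
  have hP2 : (∫ s in Ioc (u / 8) (4 * u), Real.exp (-s - u ^ 2 / (4 * s)) * s⁻¹)
      ≤ Real.exp (-u) * Real.log 32 := by
    have hmono : (∫ s in Ioc (u / 8) (4 * u), Real.exp (-s - u ^ 2 / (4 * s)) * s⁻¹)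
        ≤ ∫ s in Ioc (u / 8) (4 * u), Real.exp (-u) * s⁻¹ := by
      apply setIntegral_mono_on
        (hint.mono_set (Ioc_subset_Ioi_self.trans (Ioi_subset_Ioi ha.le)))
        ((inv_integrableOn_Ioc ha).const_mul _) measurableSet_Ioc
      intro s hs
      have hs0 : 0 < s := lt_trans ha hs.1
      refine mul_le_mul_of_nonneg_right (Real.exp_le_exp.mpr ?_) (by positivity)
      have := amgm (u := u) hs0
      linarith
    rw [integral_const_mul, int_inv_Ioc ha hab] at hmono
    have h32 : (4 * u) / (u / 8) = 32 := by field_simp; ring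
    rw [h32] at hmono
    exact hmono
  have hP3 : (∫ s in Ioi (4 * u), Real.exp (-s - u ^ 2 / (4 * s)) * s⁻¹)
      ≤ Real.exp (-u) / 4 := by
    have hmono : (∫ s in Ioi (4 * u), Real.exp (-s - u ^ 2 / (4 * s)) * s⁻¹)
        ≤ ∫ s in Ioi (4 * u), (4 * u)⁻¹ * Real.exp (-s) := by
      apply setIntegral_mono_on
        (hint.mono_set (Ioi_subset_Ioi (by positivity)))
        (by simpa [IntegrableOn] using (exp_neg_integrableOn_Ioi (4 * u) (b := 1) one_pos).const_mul (4 * u)⁻¹)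
        measurableSet_Ioi
      intro s hs
      have hs0 : (0:ℝ) < s := lt_trans (by positivity) hs
      rw [f_eq, mul_comm ((4 * u)⁻¹) (Real.exp (-s))]
      refine mul_le_mul_of_nonneg_left ?_ (Real.exp_pos _).le
      have hdn : (0:ℝ) ≤ u ^ 2 / 4 / s := by positivity
      calc Real.exp (-(u ^ 2 / 4 / s)) * s⁻¹ ≤ 1 * (4 * u)⁻¹ := by
            apply mul_le_mul (Real.exp_le_one_iff.mpr (by linarith))
              (inv_anti₀ (by positivity) hs.le) (inv_nonneg.mpr hs0.le) one_pos.le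
        _ = (4 * u)⁻¹ := one_mul _
    rw [int_cexp_Ioi] at hmono
    calc (∫ s in Ioi (4 * u), Real.exp (-s - u ^ 2 / (4 * s)) * s⁻¹)
        ≤ (4 * u)⁻¹ * Real.exp (-(4 * u)) := hmono
      _ ≤ (4:ℝ)⁻¹ * Real.exp (-u) := by
          apply mul_le_mul
          · apply inv_anti₀ (by norm_num); linarith
          · exact Real.exp_le_exp.mpr (by linarith)
          · exact (Real.exp_pos _).le
          · norm_num
      _ = Real.exp (-u) / 4 := by ring
  have hlog32 : Real.log 32 ≤ 3.5 := by
    have h2 : Real.log 2 < 0.6931471808 := Real.log_two_lt_d9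
    have : (32:ℝ) = 2 ^ 5 := by norm_num
    rw [this, Real.log_pow]
    push_cast
    linarith
  have hexp_pos := Real.exp_pos (-u)
  nlinarith
lemma restrict_lower {u a b : ℝ} (hu : 0 < u) (ha : 0 ≤ a) :
    (∫ s in Ioc a b, Real.exp (-s - u ^ 2 / (4 * s)) * s⁻¹)
      ≤ ∫ s in Ioi (0:ℝ), Real.exp (-s - u ^ 2 / (4 * s)) * s⁻¹ := by
  apply setIntegral_mono_set (f_integrable hu)
  · filter_upwards [ae_restrict_mem measurableSet_Ioi] with s hs
    exact f_nonneg hs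
  · exact ae_of_all _ (fun s hs => lt_of_le_of_lt ha hs.1)

lemma lower_all {u : ℝ} (hu : 0 < u) :
    Real.exp (-(u + 1)) * (u / 2 + 1)⁻¹
      ≤ ∫ s in Ioi (0:ℝ), Real.exp (-s - u ^ 2 / (4 * s)) * s⁻¹ := by
  refine le_trans ?_ (restrict_lower (a := u/2) (b := u/2+1) hu (by positivity))
  have hmeas : volume (Ioc (u / 2) (u / 2 + 1)) ≠ ⊤ := by
    rw [Real.volume_Ioc]; exact ENNReal.ofReal_ne_top
  have key := setIntegral_ge_of_const_le (μ := volume)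
    (f := fun s => Real.exp (-s - u ^ 2 / (4 * s)) * s⁻¹)
    (c := Real.exp (-(u + 1)) * (u / 2 + 1)⁻¹)
    measurableSet_Ioc hmeas ?_
    ((f_integrable hu).mono_set (fun s hs => lt_of_le_of_lt (by positivity) hs.1))
  · have hμ : (volume (Ioc (u / 2) (u / 2 + 1))).toReal = 1 := by
      rw [Real.volume_Ioc, ENNReal.toReal_ofReal (by linarith)]; ring
    rw [measureReal_def, hμ, one_smul] at key
    exact key
  · intro s hs
    obtain ⟨hs1, hs2⟩ := hs
    have hs0 : 0 < s := lt_of_le_of_lt (by positivity) hs1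
    have harg : -(u + 1) ≤ -s - u ^ 2 / (4 * s) := by
      have hq : u ^ 2 / (4 * s) ≤ u / 2 := by
        rw [div_le_iff₀ (by positivity)]
        nlinarith
      linarith
    apply mul_le_mul (Real.exp_le_exp.mpr harg)
      (inv_anti₀ hs0 hs2) (by positivity) (Real.exp_pos _).le

lemma lower_small {u : ℝ} (hu0 : 0 < u) (hu : u ≤ 1) :
    Real.exp (-(5/4 : ℝ)) * (-Real.log u)
      ≤ ∫ s in Ioi (0:ℝ), Real.exp (-s - u ^ 2 / (4 * s)) * s⁻¹ := by
  refine le_trans ?_ (restrict_lower (a := u) (b := 1) hu0 hu0.le)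
  have hmono : (∫ s in Ioc u 1, Real.exp (-(5/4 : ℝ)) * s⁻¹)
      ≤ ∫ s in Ioc u 1, Real.exp (-s - u ^ 2 / (4 * s)) * s⁻¹ := by
    apply setIntegral_mono_on ((inv_integrableOn_Ioc hu0).const_mul _)
      ((f_integrable hu0).mono_set (fun s hs => lt_trans hu0 hs.1))
      measurableSet_Ioc
    intro s hs
    obtain ⟨hs1, hs2⟩ := hs
    have hs0 : 0 < s := lt_trans hu0 hs1
    have harg : -(5/4 : ℝ) ≤ -s - u ^ 2 / (4 * s) := by
      have hq : u ^ 2 / (4 * s) ≤ 1/4 := by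
        rw [div_le_iff₀ (by positivity)]
        nlinarith
      linarith
    exact mul_le_mul_of_nonneg_right (Real.exp_le_exp.mpr harg) (by positivity)
  rw [integral_const_mul, int_inv_Ioc hu0 hu] at hmono
  rw [one_div, Real.log_inv] at hmono
  exact hmono

/-- `L̃_2(u) = ∫_0^∞ exp(-s - u²/(4s)) s^{-1} ds` for `u > 0` (a constant multiple of `K_0`). -/
noncomputable def Ltilde2 (u : ℝ) : ℝ :=
  ∫ s in Ioi (0:ℝ), Real.exp (-s - u^2 / (4*s)) * s⁻¹

/-- For `c̃ > 1` there are constants `C₁, C₂ > 0` with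
`C₁ (1 + |log u|) e^{-c̃u} ≤ L̃_2(u) ≤ C₂ (1 + |log u|) e^{-u}` for all `u > 0`. -/
theorem Ltilde2_bounds (ctilde : ℝ) (hc : 1 < ctilde) :
    ∃ C₁ C₂ : ℝ, 0 < C₁ ∧ 0 < C₂ ∧ ∀ u : ℝ, 0 < u →
      C₁ * (1 + |Real.log u|) * Real.exp (-(ctilde * u)) ≤ Ltilde2 u ∧
      Ltilde2 u ≤ C₂ * (1 + |Real.log u|) * Real.exp (-u) := by
  have hε : 0 < ctilde - 1 := by linarith
  refine ⟨min (Real.exp (-2) / 3) (Real.exp (-1) * (ctilde - 1) ^ 2 / 6), 9,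
    lt_min (by positivity) (by positivity), by norm_num, ?_⟩
  intro u hu0
  set C₁ := min (Real.exp (-2) / 3) (Real.exp (-1) * (ctilde - 1) ^ 2 / 6) with hC₁def
  have hC₁pos : 0 < C₁ := lt_min (by positivity) (by positivity)
  have hLt : Ltilde2 u = ∫ s in Ioi (0:ℝ), Real.exp (-s - u ^ 2 / (4 * s)) * s⁻¹ := by
    unfold Ltilde2; norm_num
  constructor
  · -- lower bound
    rcases le_or_gt u 1 with hu1 | hu1
    · -- small u
      have habs : |Real.log u| = -Real.log u :=
        abs_of_nonpos (Real.log_nonpos hu0.le hu1)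
      rw [habs, hLt]
      have A := lower_small hu0 hu1
      have B := lower_all hu0
      have B' : Real.exp (-2) * (2/3) ≤ Real.exp (-(u + 1)) * (u / 2 + 1)⁻¹ := by
        apply mul_le_mul (Real.exp_le_exp.mpr (by linarith))
        · rw [le_inv_comm₀ (by norm_num) (by linarith)]
          linarith
        · norm_num
        · exact (Real.exp_pos _).le
      have hexp1 : Real.exp (-(ctilde * u)) ≤ 1 := by
        apply Real.exp_le_one_iff.mpr
        nlinarith
      have hx : (0:ℝ) ≤ -Real.log u := by
        have := Real.log_nonpos hu0.le hu1; linarith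
      have hmono : Real.exp (-2) ≤ Real.exp (-(5/4 : ℝ)) :=
        Real.exp_le_exp.mpr (by norm_num)
      have hC₁le : C₁ ≤ Real.exp (-2) / 3 := min_le_left _ _
      set L := ∫ s in Ioi (0:ℝ), Real.exp (-s - u ^ 2 / (4 * s)) * s⁻¹
      have hgoal : C₁ * (1 + -Real.log u) ≤ L := by
        nlinarith [Real.exp_pos (-2), Real.exp_pos (-(5/4:ℝ))]
      calc C₁ * (1 + -Real.log u) * Real.exp (-(ctilde * u))
          ≤ C₁ * (1 + -Real.log u) * 1 := by
            apply mul_le_mul_of_nonneg_left hexp1 (by positivity)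
        _ = C₁ * (1 + -Real.log u) := mul_one _
        _ ≤ L := hgoal
    · -- large u
      have hu1' : (1:ℝ) ≤ u := hu1.le
      have habs : |Real.log u| = Real.log u := abs_of_nonneg (Real.log_nonneg hu1')
      rw [habs, hLt]
      have B := lower_all hu0
      have hq : (ctilde - 1) ^ 2 * u ^ 2 / 4 ≤ Real.exp ((ctilde - 1) * u) := by
        have h1 : 1 + (ctilde - 1) * u / 2 ≤ Real.exp ((ctilde - 1) * u / 2) := by
          have := Real.add_one_le_exp ((ctilde - 1) * u / 2); linarith
        have h2 : Real.exp ((ctilde - 1) * u) = Real.exp ((ctilde - 1) * u / 2) ^ 2 := by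
          rw [sq, ← Real.exp_add]; ring_nf
        nlinarith [mul_pos hε hu0, Real.exp_pos ((ctilde - 1) * u / 2)]
      have hlog : Real.log u ≤ u - 1 := Real.log_le_sub_one_of_pos hu0
      have hlog0 : 0 ≤ Real.log u := Real.log_nonneg hu1'
      have hC₁le : C₁ ≤ Real.exp (-1) * (ctilde - 1) ^ 2 / 6 := min_le_right _ _
      have hdiv : C₁ * (1 + Real.log u) ≤
          Real.exp ((ctilde - 1) * u) * Real.exp (-1) / (u / 2 + 1) := by
        rw [le_div_iff₀ (by linarith)]
        have t1 : C₁ * (1 + Real.log u) ≤ (Real.exp (-1) * (ctilde - 1) ^ 2 / 6) * u :=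
          mul_le_mul hC₁le (by linarith) (by linarith) (by positivity)
        have t2 : C₁ * (1 + Real.log u) * (u / 2 + 1)
            ≤ (Real.exp (-1) * (ctilde - 1) ^ 2 / 6) * u * (3 * u / 2) :=
          mul_le_mul t1 (by linarith) (by linarith) (by positivity)
        have t3 : (Real.exp (-1) * (ctilde - 1) ^ 2 / 6) * u * (3 * u / 2)
            = Real.exp (-1) * ((ctilde - 1) ^ 2 * u ^ 2 / 4) := by ring
        have t4 : Real.exp (-1) * ((ctilde - 1) ^ 2 * u ^ 2 / 4)
            ≤ Real.exp (-1) * Real.exp ((ctilde - 1) * u) :=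
          mul_le_mul_of_nonneg_left hq (Real.exp_pos _).le
        linarith [mul_comm (Real.exp (-1)) (Real.exp ((ctilde - 1) * u))]
      have hkey : C₁ * (1 + Real.log u) * Real.exp (-(ctilde * u))
          ≤ Real.exp (-(u + 1)) * (u / 2 + 1)⁻¹ := by
        have heq : Real.exp (-(u + 1)) * (u / 2 + 1)⁻¹
            = Real.exp (-(ctilde * u)) * (Real.exp ((ctilde - 1) * u) * Real.exp (-1) / (u / 2 + 1)) := by
          have e1 : Real.exp (-(ctilde * u)) * Real.exp ((ctilde - 1) * u) * Real.exp (-1)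
              = Real.exp (-(u + 1)) := by
            rw [← Real.exp_add, ← Real.exp_add]; ring_nf
          rw [← e1]; ring
        rw [heq, mul_comm (C₁ * (1 + Real.log u)) (Real.exp (-(ctilde * u)))]
        exact mul_le_mul_of_nonneg_left hdiv (Real.exp_pos _).le
      linarith
  · -- upper bound
    rcases le_or_gt u 1 with hu1 | hu1
    · have habs : |Real.log u| = -Real.log u :=
        abs_of_nonpos (Real.log_nonpos hu0.le hu1)
      rw [habs, hLt]
      have U := upper_small hu0 hu1
      have h3 : (1:ℝ)/3 ≤ Real.exp (-u) := by
        have he1 : Real.exp 1 < 2.7182818286 := Real.exp_one_lt_d9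
        have h2 : Real.exp (-1) ≤ Real.exp (-u) := Real.exp_le_exp.mpr (by linarith)
        have h4 : (1:ℝ)/3 ≤ Real.exp (-1) := by
          rw [Real.exp_neg, le_inv_comm₀ (by norm_num) (Real.exp_pos 1)]
          linarith
        linarith
      have hx : (0:ℝ) ≤ -Real.log u := by
        have := Real.log_nonpos hu0.le hu1; linarith
      nlinarith
    · have habs : |Real.log u| = Real.log u := abs_of_nonneg (Real.log_nonneg hu1.le)
      rw [habs, hLt]
      have U := upper_large hu1.le
      have hlog0 : 0 ≤ Real.log u := Real.log_nonneg hu1.le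
      nlinarith [Real.exp_pos (-u)]
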